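/- Let r be a reward function that is differentiable on [0,∞), let c > 0, and let σ be a normal stationary policy on [0,c]. Let g : [0,c] → ℝ be nondecreasing, Lipschitz, and concave, and suppose that for Lebesgue-almost every x ∈ [0,c] at which g is differentiable at x − σ(x), one has g'(x − σ(x)) ≤ r'(σ(x)). Then the function h(x) := r(σ(x)) + g(x − σ(x)) is nondecreasing, Lipschitz, and concave on [0,c], and for Lebesgue-almost every x ∈ [0,c] at which h is differentiable, h'(x) ≤ r'(σ(x)). -/

import Mathlib

open Set MeasureTheory

/-- **Key iteration lemma** (Lemma 1). Let `r` be a reward function differentiable on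
`[0, ∞)` with derivative `r'`, `σ` a normal stationary policy on `[0, c]`, and
`g` nondecreasing, Lipschitz, and concave on `[0, c]` such that for a.e. `x ∈ [0, c]` at
which `g` is differentiable at `x - σ x` one has `g' (x - σ x) ≤ r' (σ x)`. Then
`h x := r (σ x) + g (x - σ x)` is nondecreasing, Lipschitz, and concave on `[0, c]`, and
for a.e. `x ∈ [0, c]` at which `h` is differentiable, `h' x ≤ r' (σ x)`. -/
theorem iteration_lemma
    (r r' : ℝ → ℝ)
    (hr_zero : r 0 = 0)
    (hr_nonneg : ∀ x : ℝ, 0 ≤ x → 0 ≤ r x)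
    (hr_mono : MonotoneOn r (Ici (0 : ℝ)))
    (hr_lip : ∃ K : NNReal, LipschitzOnWith K r (Ici (0 : ℝ)))
    (hr_concave : ConcaveOn ℝ (Ici (0 : ℝ)) r)
    (hr_deriv : ∀ x : ℝ, 0 ≤ x → HasDerivWithinAt r (r' x) (Ici (0 : ℝ)) x)
    (c : ℝ) (hc : 0 < c)
    (σ : ℝ → ℝ)
    (hσ_pol : ∀ x ∈ Icc (0 : ℝ) c, 0 ≤ σ x ∧ σ x ≤ x)
    (hσ_mono : MonotoneOn σ (Icc (0 : ℝ) c))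
    (hσ_concave : ConcaveOn ℝ (Icc (0 : ℝ) c) σ)
    (g : ℝ → ℝ)
    (hg_mono : MonotoneOn g (Icc (0 : ℝ) c))
    (hg_lip : ∃ K : NNReal, LipschitzOnWith K g (Icc (0 : ℝ) c))
    (hg_concave : ConcaveOn ℝ (Icc (0 : ℝ) c) g)
    (hg_deriv : ∀ᵐ x ∂(volume.restrict (Icc (0 : ℝ) c)),
      DifferentiableAt ℝ g (x - σ x) → deriv g (x - σ x) ≤ r' (σ x)) :
    MonotoneOn (fun x => r (σ x) + g (x - σ x)) (Icc (0 : ℝ) c) ∧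
      (∃ K : NNReal, LipschitzOnWith K (fun x => r (σ x) + g (x - σ x)) (Icc (0 : ℝ) c)) ∧
      ConcaveOn ℝ (Icc (0 : ℝ) c) (fun x => r (σ x) + g (x - σ x)) ∧
      (∀ᵐ x ∂(volume.restrict (Icc (0 : ℝ) c)),
        DifferentiableAt ℝ (fun x => r (σ x) + g (x - σ x)) x →
          deriv (fun x => r (σ x) + g (x - σ x)) x ≤ r' (σ x)) := by
  obtain ⟨Kr, hKr⟩ := hr_lip
  obtain ⟨Kg, hKg⟩ := hg_lip
  have h0c : (0:ℝ) ∈ Icc (0:ℝ) c := left_mem_Icc.2 hc.le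
  have hcc : c ∈ Icc (0:ℝ) c := right_mem_Icc.2 hc.le
  have hσ_nonneg : ∀ x ∈ Icc (0:ℝ) c, (0:ℝ) ≤ σ x := fun x hx => (hσ_pol x hx).1
  have hu_mem : ∀ x ∈ Icc (0:ℝ) c, x - σ x ∈ Icc (0:ℝ) c := fun x hx =>
    ⟨sub_nonneg.2 (hσ_pol x hx).2, (sub_le_self x (hσ_pol x hx).1).trans hx.2⟩
  have hσ0 : σ 0 = 0 := le_antisymm (hσ_pol 0 h0c).2 (hσ_pol 0 h0c).1
  -- the increments of σ are at most the increments of the identity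
  have hσ_sub : ∀ x ∈ Icc (0:ℝ) c, ∀ y ∈ Icc (0:ℝ) c, x ≤ y → σ y - σ x ≤ y - x := by
    intro x hx y hy hxy
    by_cases hx0 : x = 0
    · subst hx0
      simp only [hσ0, sub_zero]
      exact (hσ_pol y hy).2
    · have h0 : 0 < x := lt_of_le_of_ne hx.1 (Ne.symm hx0)
      have hy0 : 0 < y := h0.trans_le hxy
      have ha : (0:ℝ) ≤ 1 - x / y := by
        have : x / y ≤ 1 := (div_le_one hy0).2 hxy
        linarith
      have hb : (0:ℝ) ≤ x / y := div_nonneg h0.le hy0.le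
      have hab : (1 - x / y) + x / y = 1 := by ring
      have hpt : (1 - x / y) • (0:ℝ) + (x / y) • y = x := by
        simp only [smul_eq_mul, mul_zero, zero_add]
        field_simp
      have hcon := hσ_concave.2 h0c hy ha hb hab
      rw [hpt] at hcon
      simp only [smul_eq_mul, hσ0, mul_zero, zero_add] at hcon
      -- hcon : (x / y) * σ y ≤ σ x
      have h1 : x * σ y ≤ σ x * y := by
        rw [div_mul_eq_mul_div, div_le_iff₀ hy0] at hcon
        linarith
      have h2 : σ y * (y - x) ≤ y * (y - x) :=
        mul_le_mul_of_nonneg_right (hσ_pol y hy).2 (sub_nonneg.2 hxy)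
      have h3 : y * (σ y - σ x) ≤ y * (y - x) := by nlinarith
      exact le_of_mul_le_mul_left h3 hy0
  have hu_mono : ∀ x ∈ Icc (0:ℝ) c, ∀ y ∈ Icc (0:ℝ) c, x ≤ y → x - σ x ≤ y - σ y := by
    intro x hx y hy hxy
    have := hσ_sub x hx y hy hxy
    linarith
  -- facts about r'
  have hr'_nonneg : ∀ z, 0 ≤ z → 0 ≤ r' z := by
    intro z hz
    have hz1 : z < z + 1 := lt_add_one z
    have hs : slope r z (z+1) ≤ r' z :=
      hr_concave.slope_le_of_hasDerivWithinAt hz (by simp only [mem_Ici]; linarith) hz1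
        (hr_deriv z hz)
    have h0 : 0 ≤ slope r z (z+1) := by
      rw [slope_def_field]
      apply div_nonneg _ (by linarith)
      have := hr_mono (mem_Ici.2 hz) (mem_Ici.2 (by linarith : (0:ℝ) ≤ z + 1)) hz1.le
      linarith
    linarith
  have hr'_anti : ∀ z, 0 ≤ z → ∀ w, z ≤ w → r' w ≤ r' z := by
    intro z hz w hzw
    rcases eq_or_lt_of_le hzw with rfl | h
    · exact le_rfl
    have hw : (0:ℝ) ≤ w := hz.trans hzw
    have h1 : slope r z w ≤ r' z :=
      hr_concave.slope_le_of_hasDerivWithinAt (mem_Ici.2 hz) (mem_Ici.2 hw) h (hr_deriv z hz)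
    have h2 : r' w ≤ slope r z w :=
      hr_concave.le_slope_of_hasDerivWithinAt (mem_Ici.2 hz) (mem_Ici.2 hw) h (hr_deriv w hw)
    linarith
  have hr_tangent : ∀ z, 0 ≤ z → ∀ q, 0 ≤ q → r q ≤ r z + r' z * (q - z) := by
    intro z hz q hq
    rcases lt_trichotomy q z with h | h | h
    · have h2 : r' z ≤ slope r q z :=
        hr_concave.le_slope_of_hasDerivWithinAt (mem_Ici.2 hq) (mem_Ici.2 hz) h (hr_deriv z hz)
      rw [slope_def_field, le_div_iff₀ (by linarith)] at h2
      have he : r' z * (q - z) = -(r' z * (z - q)) := by ring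
      linarith
    · subst h; simp
    · have h1 : slope r z q ≤ r' z :=
        hr_concave.slope_le_of_hasDerivWithinAt (mem_Ici.2 hz) (mem_Ici.2 hq) h (hr_deriv z hz)
      rw [slope_def_field, div_le_iff₀ (by linarith)] at h1
      linarith
  -- abs increments
  have hσ_abs : ∀ x ∈ Icc (0:ℝ) c, ∀ y ∈ Icc (0:ℝ) c, |σ x - σ y| ≤ |x - y| := by
    intro x hx y hy
    rcases le_total x y with h | h
    · rw [abs_sub_comm, abs_of_nonneg (sub_nonneg.2 (hσ_mono hx hy h)), abs_sub_comm (x:ℝ) y,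
        abs_of_nonneg (sub_nonneg.2 h)]
      exact hσ_sub x hx y hy h
    · rw [abs_of_nonneg (sub_nonneg.2 (hσ_mono hy hx h)), abs_of_nonneg (sub_nonneg.2 h)]
      exact hσ_sub y hy x hx h
  have hu_abs : ∀ x ∈ Icc (0:ℝ) c, ∀ y ∈ Icc (0:ℝ) c,
      |(x - σ x) - (y - σ y)| ≤ |x - y| := by
    intro x hx y hy
    rcases le_total x y with h | h
    · have h1 := hu_mono x hx y hy h
      have h2 := hσ_mono hx hy h
      rw [abs_of_nonpos (by linarith), abs_of_nonpos (by linarith)]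
      linarith
    · have h1 := hu_mono y hy x hx h
      have h2 := hσ_mono hy hx h
      rw [abs_of_nonneg (by linarith), abs_of_nonneg (by linarith)]
      linarith

  -- projection onto [0,c]
  set π : ℝ → ℝ := fun t => (projIcc (0:ℝ) c hc.le t : ℝ) with hπdef
  have hπ_mem : ∀ t, π t ∈ Icc (0:ℝ) c := fun t => (projIcc (0:ℝ) c hc.le t).2
  have hπ_id : ∀ t ∈ Icc (0:ℝ) c, π t = t := fun t ht => by
    simp [hπdef, projIcc_of_mem hc.le ht]
  have hπ_lip : LipschitzWith 1 π := by
    have h := (LipschitzWith.subtype_val (Icc (0:ℝ) c)).comp (LipschitzWith.projIcc hc.le)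
    rw [mul_one] at h
    exact h
  have hπ_mono : Monotone π := fun a b hab => by
    exact Subtype.coe_le_coe.2 (monotone_projIcc hc.le hab)
  have hu_lipOn : LipschitzOnWith 1 (fun t => t - σ t) (Icc (0:ℝ) c) := by
    rw [lipschitzOnWith_iff_dist_le_mul]
    intro a ha b hb
    rw [Real.dist_eq, Real.dist_eq, NNReal.coe_one, one_mul]
    exact hu_abs a ha b hb
  set ubar : ℝ → ℝ := fun t => π t - σ (π t) with hubardef
  have hubar_lip : LipschitzWith 1 ubar := by
    apply LipschitzWith.of_dist_le_mul
    intro a b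
    have h1 := (lipschitzOnWith_iff_dist_le_mul.mp hu_lipOn) _ (hπ_mem a) _ (hπ_mem b)
    have h2 := hπ_lip.dist_le_mul a b
    simp only [NNReal.coe_one, one_mul] at h1 h2 ⊢
    exact h1.trans h2
  have himage_null : ∀ T : Set ℝ, volume T = 0 → volume (ubar '' T) = 0 := by
    intro T hT
    have h1 := hubar_lip.hausdorffMeasure_image_le (zero_le_one' ℝ) T
    rw [MeasureTheory.hausdorffMeasure_real] at h1
    simp only [ENNReal.coe_one, ENNReal.one_rpow, one_mul, hT, nonpos_iff_eq_zero] at h1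
    exact h1
  -- the set where the a.e. hypothesis on g fails, within [0,c]
  set T : Set ℝ := {y | y ∈ Icc (0:ℝ) c ∧
      ¬(DifferentiableAt ℝ g (y - σ y) → deriv g (y - σ y) ≤ r' (σ y))} with hTdef
  have hT_null : volume T = 0 := by
    have h1 := (ae_restrict_iff' measurableSet_Icc).mp hg_deriv
    rw [ae_iff] at h1
    refine measure_mono_null ?_ h1
    intro y hy
    simp only [hTdef, mem_setOf_eq] at hy ⊢
    tauto
  -- nondifferentiability points of the (monotone) extension of g
  have hgπ_mono : Monotone (fun t => g (π t)) := fun a b hab =>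
    hg_mono (hπ_mem a) (hπ_mem b) (hπ_mono hab)
  have hN_null : volume {w | ¬ DifferentiableAt ℝ (fun t => g (π t)) w} = 0 := by
    have := hgπ_mono.ae_differentiableAt
    rw [ae_iff] at this
    exact this
  -- continuity of t ↦ t - σ t on [0,c]
  have hu_cont : ContinuousOn (fun t => t - σ t) (Icc (0:ℝ) c) := hu_lipOn.continuousOn
  -- KEY inequality
  have key : ∀ x ∈ Icc (0:ℝ) c, ∀ v ∈ Icc (0:ℝ) c, x - σ x ≤ v → v ≤ c - σ c →
      g v - g (x - σ x) ≤ r' (σ x) * (v - (x - σ x)) := by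
    intro x hx v hv huxv hvc
    rcases eq_or_lt_of_le huxv with heq | hlt
    · rw [← heq]; simp
    by_contra hcon
    push_neg at hcon
    set ε : ℝ := (g v - g (x - σ x) - r' (σ x) * (v - (x - σ x))) / 2 with hεdef
    have hε : 0 < ε := by
      simp only [hεdef]
      linarith
    set ε' : ℝ := ε / ((Kg : ℝ) + 1) with hε'def
    have hKg1 : (0:ℝ) < (Kg : ℝ) + 1 := by positivity
    have hε' : 0 < ε' := div_pos hε hKg1
    set m : ℝ := min v ((x - σ x) + ε') with hmdef
    have hm_gt : x - σ x < m := lt_min hlt (by linarith)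
    -- pick a good point w
    have hnots : ¬ (Ioo (x - σ x) m ⊆
        ubar '' T ∪ {w | ¬ DifferentiableAt ℝ (fun t => g (π t)) w}) := by
      intro hsub
      have hv0 : volume (Ioo (x - σ x) m) = 0 :=
        measure_mono_null hsub (measure_union_null (himage_null T hT_null) hN_null)
      rw [Real.volume_Ioo] at hv0
      have := ENNReal.ofReal_pos.2 (by linarith : (0:ℝ) < m - (x - σ x))
      rw [hv0] at this
      exact lt_irrefl 0 this
    obtain ⟨w, hw_mem, hw_not⟩ := not_subset.mp hnots
    obtain ⟨hw1, hw2⟩ := hw_mem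
    have hw_nBad : w ∉ ubar '' T := fun h => hw_not (Or.inl h)
    have hw_diff' : DifferentiableAt ℝ (fun t => g (π t)) w := by
      by_contra h
      exact hw_not (Or.inr h)
    have hwv : w < v := lt_of_lt_of_le hw2 (min_le_left _ _)
    have hwe : w ≤ (x - σ x) + ε' := le_of_lt (lt_of_lt_of_le hw2 (min_le_right _ _))
    have hux_mem : x - σ x ∈ Icc (0:ℝ) c := hu_mem x hx
    have huc : (c - σ c) ≤ c := sub_le_self c (hσ_nonneg c hcc)
    have hw_Icc : w ∈ Icc (0:ℝ) c := ⟨hux_mem.1.trans hw1.le, hwv.le.trans hv.2⟩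
    have hw_Ioo : w ∈ Ioo (0:ℝ) c := by
      constructor
      · exact lt_of_le_of_lt hux_mem.1 hw1
      · exact lt_of_lt_of_le hwv (le_trans hvc huc)
    -- g is differentiable at w
    have hev : (fun t => g (π t)) =ᶠ[nhds w] g := by
      filter_upwards [Ioo_mem_nhds hw_Ioo.1 hw_Ioo.2] with t ht
      rw [hπ_id t (Ioo_subset_Icc_self ht)]
    have hw_diff : DifferentiableAt ℝ g w := by
      rwa [hev.differentiableAt_iff] at hw_diff'
    -- find y ∈ [x,c] with y - σ y = w
    have hcont' : ContinuousOn (fun t => t - σ t) (Icc x c) :=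
      hu_cont.mono (Icc_subset_Icc hx.1 le_rfl)
    have hw_between : w ∈ Icc (x - σ x) (c - σ c) := ⟨hw1.le, hwv.le.trans hvc⟩
    obtain ⟨y, hy_mem, hy_eq⟩ := intermediate_value_Icc hx.2 hcont' hw_between
    have hy_Icc : y ∈ Icc (0:ℝ) c := ⟨hx.1.trans hy_mem.1, hy_mem.2⟩
    -- y is a good point for the a.e. hypothesis
    have hy_good : DifferentiableAt ℝ g (y - σ y) → deriv g (y - σ y) ≤ r' (σ y) := by
      by_contra hny
      apply hw_nBad
      refine ⟨y, ⟨hy_Icc, hny⟩, ?_⟩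
      simp only [hubardef]
      rw [hπ_id y hy_Icc]
      exact hy_eq
    have hy_eq' : y - σ y = w := hy_eq
    have hder : deriv g w ≤ r' (σ y) := by
      have := hy_good (by rwa [hy_eq'])
      rwa [hy_eq'] at this
    have hrr : r' (σ y) ≤ r' (σ x) :=
      hr'_anti (σ x) (hσ_nonneg x hx) (σ y) (hσ_mono hx hy_Icc hy_mem.1)
    -- slope bound from concavity of g
    have hslope : slope g w v ≤ deriv g w :=
      hg_concave.slope_le_of_hasDerivAt hw_Icc hv hwv hw_diff.hasDerivAt
    rw [slope_def_field, div_le_iff₀ (by linarith)] at hslope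
    -- Lipschitz bound near x - σ x
    have hglip : g w - g (x - σ x) ≤ (Kg : ℝ) * ε' := by
      have h1 := (lipschitzOnWith_iff_dist_le_mul.mp hKg) w hw_Icc (x - σ x) hux_mem
      rw [Real.dist_eq, Real.dist_eq] at h1
      have h2 : |g w - g (x - σ x)| ≤ (Kg : ℝ) * |w - (x - σ x)| := h1
      have h3 : |w - (x - σ x)| ≤ ε' := by
        rw [abs_of_nonneg (by linarith)]
        linarith
      calc g w - g (x - σ x) ≤ |g w - g (x - σ x)| := le_abs_self _
        _ ≤ (Kg : ℝ) * |w - (x - σ x)| := h2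
        _ ≤ (Kg : ℝ) * ε' := mul_le_mul_of_nonneg_left h3 Kg.coe_nonneg
    have hKgε : (Kg : ℝ) * ε' ≤ ε := by
      rw [hε'def]
      rw [mul_div_assoc']  -- (Kg * ε) / (Kg + 1)
      rw [div_le_iff₀ hKg1]
      nlinarith [Kg.coe_nonneg, hε.le]
    -- combine
    have hr'x_nonneg : 0 ≤ r' (σ x) := hr'_nonneg (σ x) (hσ_nonneg x hx)
    have hchain : g v - g w ≤ r' (σ x) * (v - w) := by
      have h1 : deriv g w * (v - w) ≤ r' (σ x) * (v - w) :=
        mul_le_mul_of_nonneg_right (hder.trans hrr) (by linarith)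
      linarith
    have hfin : r' (σ x) * (v - w) ≤ r' (σ x) * (v - (x - σ x)) :=
      mul_le_mul_of_nonneg_left (by linarith) hr'x_nonneg
    have : g v - g (x - σ x) ≤ r' (σ x) * (v - (x - σ x)) + ε := by linarith
    simp only [hεdef] at this
    linarith

  refine ⟨?_, ⟨Kr + Kg, ?_⟩, ?_, ?_⟩
  · -- Monotone
    intro x hx y hy hxy
    exact add_le_add
      (hr_mono (mem_Ici.2 (hσ_nonneg x hx)) (mem_Ici.2 (hσ_nonneg y hy)) (hσ_mono hx hy hxy))
      (hg_mono (hu_mem x hx) (hu_mem y hy) (hu_mono x hx y hy hxy))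
  · -- Lipschitz
    rw [lipschitzOnWith_iff_dist_le_mul]
    intro x hx y hy
    have d1 := (lipschitzOnWith_iff_dist_le_mul.mp hKr) _ (mem_Ici.2 (hσ_nonneg x hx)) _
      (mem_Ici.2 (hσ_nonneg y hy))
    have d2 := (lipschitzOnWith_iff_dist_le_mul.mp hKg) _ (hu_mem x hx) _ (hu_mem y hy)
    simp only [Real.dist_eq] at d1 d2 ⊢
    have e1 : |σ x - σ y| ≤ |x - y| := hσ_abs x hx y hy
    have e2 : |x - σ x - (y - σ y)| ≤ |x - y| := hu_abs x hx y hy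
    have habs : |(r (σ x) + g (x - σ x)) - (r (σ y) + g (y - σ y))| ≤
        |r (σ x) - r (σ y)| + |g (x - σ x) - g (y - σ y)| := by
      have h1 := abs_add_le (r (σ x) - r (σ y)) (g (x - σ x) - g (y - σ y))
      have he : (r (σ x) + g (x - σ x)) - (r (σ y) + g (y - σ y)) =
          (r (σ x) - r (σ y)) + (g (x - σ x) - g (y - σ y)) := by ring
      rw [he]
      exact h1
    have hcast : ((Kr + Kg : NNReal) : ℝ) = (Kr : ℝ) + (Kg : ℝ) := by push_cast; ring
    rw [hcast]
    have m1 : (Kr : ℝ) * |σ x - σ y| ≤ (Kr : ℝ) * |x - y| :=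
      mul_le_mul_of_nonneg_left e1 Kr.coe_nonneg
    have m2 : (Kg : ℝ) * |x - σ x - (y - σ y)| ≤ (Kg : ℝ) * |x - y| :=
      mul_le_mul_of_nonneg_left e2 Kg.coe_nonneg
    nlinarith [habs, d1, d2, m1, m2]
  · -- Concave
    have conc_aux : ∀ x₁ ∈ Icc (0:ℝ) c, ∀ x₂ ∈ Icc (0:ℝ) c, x₁ ≤ x₂ →
        ∀ a b : ℝ, 0 ≤ a → 0 ≤ b → a + b = 1 →
        a * (r (σ x₁) + g (x₁ - σ x₁)) + b * (r (σ x₂) + g (x₂ - σ x₂)) ≤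
        r (σ (a * x₁ + b * x₂)) + g ((a * x₁ + b * x₂) - σ (a * x₁ + b * x₂)) := by
      intro x₁ h₁ x₂ h₂ hle a b ha hb hab
      set x := a * x₁ + b * x₂ with hxdef
      have hx : x ∈ Icc (0:ℝ) c := by
        constructor
        · nlinarith [mul_nonneg ha h₁.1, mul_nonneg hb h₂.1]
        · nlinarith [mul_le_mul_of_nonneg_left h₁.2 ha, mul_le_mul_of_nonneg_left h₂.2 hb]
      set s := a * σ x₁ + b * σ x₂ with hsdef
      have hs_le : s ≤ σ x := by
        have h := hσ_concave.2 h₁ h₂ ha hb hab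
        simpa [smul_eq_mul] using h
      have hs_nonneg : 0 ≤ s := by
        have := hσ_nonneg x₁ h₁
        have := hσ_nonneg x₂ h₂
        nlinarith [mul_nonneg ha (hσ_nonneg x₁ h₁), mul_nonneg hb (hσ_nonneg x₂ h₂)]
      set v := a * (x₁ - σ x₁) + b * (x₂ - σ x₂) with hvdef
      have hveq : v = x - s := by rw [hvdef, hxdef, hsdef]; ring
      have hu₁ := hu_mem x₁ h₁
      have hu₂ := hu_mem x₂ h₂
      have hv_mem : v ∈ Icc (0:ℝ) c := by
        constructor
        · nlinarith [mul_nonneg ha hu₁.1, mul_nonneg hb hu₂.1]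
        · nlinarith [mul_le_mul_of_nonneg_left hu₁.2 ha, mul_le_mul_of_nonneg_left hu₂.2 hb]
      have huxv : x - σ x ≤ v := by rw [hveq]; linarith
      have hu2c : x₂ - σ x₂ ≤ c - σ c := hu_mono x₂ h₂ c hcc h₂.2
      have hu12 : x₁ - σ x₁ ≤ x₂ - σ x₂ := hu_mono x₁ h₁ x₂ h₂ hle
      have hsplit : a * (x₂ - σ x₂) + b * (x₂ - σ x₂) = x₂ - σ x₂ := by
        rw [← add_mul, hab, one_mul]
      have hvc : v ≤ c - σ c := by
        have h9 := mul_le_mul_of_nonneg_left hu12 ha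
        linarith
      have hkey := key x hx v hv_mem huxv hvc
      have htan := hr_tangent (σ x) (hσ_nonneg x hx) s hs_nonneg
      have hgc := hg_concave.2 hu₁ hu₂ ha hb hab
      simp only [smul_eq_mul] at hgc
      have hrc := hr_concave.2 (mem_Ici.2 (hσ_nonneg x₁ h₁)) (mem_Ici.2 (hσ_nonneg x₂ h₂)) ha hb hab
      simp only [smul_eq_mul] at hrc
      have hcancel : r' (σ x) * (v - (x - σ x)) = -(r' (σ x) * (s - σ x)) := by
        rw [hveq]; ring
      linarith [hkey, htan, hgc, hrc, hcancel]
    refine ⟨convex_Icc 0 c, ?_⟩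
    intro x₁ h₁ x₂ h₂ a b ha hb hab
    simp only [smul_eq_mul]
    rcases le_total x₁ x₂ with hle | hle
    · exact conc_aux x₁ h₁ x₂ h₂ hle a b ha hb hab
    · have h := conc_aux x₂ h₂ x₁ h₁ hle b a hb ha (by linarith)
      rw [show b * x₂ + a * x₁ = a * x₁ + b * x₂ by ring] at h
      linarith
  · -- a.e. derivative bound
    have main4 : ∀ x ∈ Ioo (0:ℝ) c, DifferentiableAt ℝ (fun t => r (σ t) + g (t - σ t)) x →
        deriv (fun t => r (σ t) + g (t - σ t)) x ≤ r' (σ x) := by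
      intro x hx hdiff
      have hxI : x ∈ Icc (0:ℝ) c := Ioo_subset_Icc_self hx
      have htend : Filter.Tendsto (slope (fun t => r (σ t) + g (t - σ t)) x)
          (nhdsWithin x (Ioi x)) (nhds (deriv (fun t => r (σ t) + g (t - σ t)) x)) := by
        have h1 := hasDerivAt_iff_tendsto_slope.mp hdiff.hasDerivAt
        refine h1.mono_left (nhdsWithin_mono x ?_)
        intro y hy
        exact Set.mem_compl_singleton_iff.mpr (ne_of_gt (show x < y from hy))
      have hub : ∀ᶠ y in nhdsWithin x (Ioi x),
          slope (fun t => r (σ t) + g (t - σ t)) x y ≤ r' (σ x) := by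
        filter_upwards [Ioo_mem_nhdsGT_of_mem (⟨le_rfl, hx.2⟩ : x ∈ Ico x c)] with y hy
        have hyI : y ∈ Icc (0:ℝ) c := ⟨hxI.1.trans hy.1.le, hy.2.le⟩
        have e1 := hr_tangent (σ x) (hσ_nonneg x hxI) (σ y) (hσ_nonneg y hyI)
        have e2 := key x hxI (y - σ y) (hu_mem y hyI) (hu_mono x hxI y hyI hy.1.le)
          (hu_mono y hyI c hcc hy.2.le)
        rw [slope_def_field, div_le_iff₀ (by linarith [hy.1] : (0:ℝ) < y - x)]
        show r (σ y) + g (y - σ y) - (r (σ x) + g (x - σ x)) ≤ r' (σ x) * (y - x)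
        have hcancel : r' (σ x) * (σ y - σ x) + r' (σ x) * ((y - σ y) - (x - σ x)) =
            r' (σ x) * (y - x) := by ring
        linarith
      exact le_of_tendsto htend hub
    rw [ae_restrict_iff' measurableSet_Icc]
    have hnull : (volume : Measure ℝ) {0, c} = 0 :=
      ((Set.finite_singleton c).insert 0).measure_zero _
    have h0 : ∀ᵐ y ∂(volume : Measure ℝ), y ∉ ({0, c} : Set ℝ) :=
      measure_eq_zero_iff_ae_notMem.mp hnull
    filter_upwards [h0] with y hy0 hyI hdiff
    have hyIoo : y ∈ Ioo (0:ℝ) c := by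
      simp only [mem_insert_iff, mem_singleton_iff, not_or] at hy0
      exact ⟨lt_of_le_of_ne hyI.1 (Ne.symm hy0.1), lt_of_le_of_ne hyI.2 hy0.2⟩
    exact main4 y hyIoo hdiff
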